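/- In a graph G consisting of disjoint 'token triangles' (copies of K_3) and 'token edges' (copies of K_2) joined by 'link edges' so that every vertex belongs to exactly one token triangle or token edge: if T is an independent set of G containing exactly one vertex from every token triangle and every token edge, and T' is obtained from T by sliding a token along one edge of G (i.e., T' = (T \ {u}) ∪ {v} for some edge uv with T' independent), then T' also contains exactly one vertex from every token triangle and token edge, and the slide occurs within a single token triangle or token edge. -/
import Mathlib


theorem token_slide_stays_in_gadget {V : Type*} [Fintype V] (G : SimpleGraph V)
    {ι : Type*} (g : V → ι)
    -- every gadget (fiber of `g`) is a clique: token triangles and token edges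
    (hclique : ∀ u v : V, g u = g v → u ≠ v → G.Adj u v)
    -- every gadget is a copy of K_2 or K_3
    (hsize : ∀ i : ι, 2 ≤ {v : V | g v = i}.ncard ∧ {v : V | g v = i}.ncard ≤ 3)
    (T : Set V)
    -- T is an independent set
    (hTind : ∀ a ∈ T, ∀ b ∈ T, ¬ G.Adj a b)
    -- T is standard: exactly one token on each gadget
    (hTstd : ∀ i : ι, ∃! t : V, t ∈ T ∧ g t = i)
    (u v : V) (hu : u ∈ T) (hv : v ∉ T) (huv : G.Adj u v)
    (T' : Set V) (hT' : T' = insert v (T \ {u}))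
    (hT'ind : ∀ a ∈ T', ∀ b ∈ T', ¬ G.Adj a b) :
    (∀ i : ι, ∃! t : V, t ∈ T' ∧ g t = i) ∧ g u = g v := by
  have hvT' : v ∈ T' := by rw [hT']; exact Set.mem_insert _ _
  have hguv : g u = g v := by
    by_contra hne
    obtain ⟨t, ⟨htT, htg⟩, _⟩ := hTstd (g v)
    have htu : t ≠ u := fun h => hne (h ▸ htg)
    have htT' : t ∈ T' := by rw [hT']; exact Set.mem_insert_of_mem _ ⟨htT, htu⟩
    have htv : t ≠ v := fun h => hv (h ▸ htT)
    exact hT'ind t htT' v hvT' (hclique t v htg htv)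
  refine ⟨fun i => ?_, hguv⟩
  by_cases hi : i = g u
  · refine ⟨v, ⟨hvT', hi ▸ hguv.symm⟩, ?_⟩
    rintro t ⟨htT', htg⟩
    rw [hT'] at htT'
    rcases htT' with h | ⟨htT, htu⟩
    · exact h
    · exact absurd ((hTstd (g u)).unique ⟨htT, hi ▸ htg⟩ ⟨hu, rfl⟩) htu
  · obtain ⟨t, ⟨htT, htg⟩, huniq⟩ := hTstd i
    have htu : t ≠ u := fun h => hi ((h ▸ htg).symm)
    refine ⟨t, ⟨by rw [hT']; exact Set.mem_insert_of_mem _ ⟨htT, htu⟩, htg⟩, ?_⟩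
    rintro s ⟨hsT', hsg⟩
    rw [hT'] at hsT'
    rcases hsT' with h | ⟨hsT, _⟩
    · exact absurd (hguv.trans (h ▸ hsg)).symm hi
    · exact huniq s ⟨hsT, hsg⟩
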